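/- arXiv:1710.00877 — 4 statements merged into one kernel-verified Lean document; each statement's English description precedes it below -/
import Mathlib

section
/- Let T_{W,κ} be a κ-branching bundle graph and fix vertices u = (r,A) and v = (s,B). If (t_i, C_i)_{i=0}^n is a path in T_{W,κ} starting at u and ending at v, then there exists i ∈ {0,…,n} such that C_i ⪯ A∧B. -/
/-- The longest common initial segment (longest common prefix) of two finite sequences. -/
def commonPrefix {κ : Type*} [DecidableEq κ] : List κ → List κ → List κ
  | a :: as, b :: bs => if a = b then a :: commonPrefix as bs else []
  | _, _ => []

/-- Vertices of the κ-branching bundle graph `T_{W,κ}`: pairs `(r, A)` with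
`r ∈ {0,…,M+1}` and `A` a sequence in `κ` of length `w r`. -/
def BundleVertex (M : ℕ) (w : ℕ → ℕ) (κ : Type*) : Type _ :=
  {p : ℕ × List κ // p.1 ≤ M + 1 ∧ p.2.length = w p.1}

/-- The κ-branching bundle graph `T_{W,κ}` associated with the sequence
`W = (w_r)_{r=0}^{M+1}`: `(r,A)` and `(s,B)` are adjacent iff `|r - s| = 1` and one of
`A`, `B` is an initial segment of the other. -/
def bundleGraph (M : ℕ) (w : ℕ → ℕ) (κ : Type*) : SimpleGraph (BundleVertex M w κ) where
  Adj u v := (u.val.1 + 1 = v.val.1 ∨ v.val.1 + 1 = u.val.1) ∧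
      (u.val.2 <+: v.val.2 ∨ v.val.2 <+: u.val.2)
  symm := by
    constructor
    intro u v h
    exact ⟨h.1.symm, h.2.symm⟩
  loopless := by
    constructor
    intro u h
    rcases h.1 with h1 | h1 <;> omega

lemma prefix_commonPrefix {κ : Type*} [DecidableEq κ] :
    ∀ (x a b : List κ), x <+: a → x <+: b → x <+: commonPrefix a b := by
  intro x
  induction x with
  | nil => intro a b _ _; exact List.nil_prefix
  | cons c xs ih =>
    intro a b ha hb
    obtain ⟨as, rfl⟩ := ha
    obtain ⟨bs, rfl⟩ := hb
    simp only [List.cons_append, commonPrefix, if_pos rfl]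
    exact (List.cons_prefix_cons).2 ⟨rfl, ih _ _ (List.prefix_append _ _) (List.prefix_append _ _)⟩

lemma commonPrefix_prefix_right {κ : Type*} [DecidableEq κ] :
    ∀ (a b : List κ), commonPrefix a b <+: b := by
  intro a
  induction a with
  | nil => intro b; cases b <;> exact List.nil_prefix
  | cons c as ih =>
    intro b
    cases b with
    | nil => exact List.nil_prefix
    | cons d bs =>
      by_cases h : c = d
      · subst h
        simp only [commonPrefix, if_pos rfl]
        exact List.cons_prefix_cons.mpr ⟨rfl, ih bs⟩
      · simp [commonPrefix, h]

lemma commonPrefix_prefix_left {κ : Type*} [DecidableEq κ] :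
    ∀ (a b : List κ), commonPrefix a b <+: a := by
  intro a
  induction a with
  | nil => intro b; cases b <;> exact List.nil_prefix
  | cons c as ih =>
    intro b
    cases b with
    | nil => exact List.nil_prefix
    | cons d bs =>
      by_cases h : c = d
      · subst h
        simp only [commonPrefix, if_pos rfl]
        exact List.cons_prefix_cons.mpr ⟨rfl, ih bs⟩
      · simp [commonPrefix, h]

/-- **Lemma `path`.** If `(t_i, C_i)_{i=0}^n` is a path in `T_{W,κ}` from
`u = (r,A)` to `v = (s,B)`, then some vertex `(t_i, C_i)` on the path satisfies
`C_i ⪯ A ∧ B`. -/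
theorem bundleGraph_walk_exists_prefix_commonPrefix
    (M : ℕ) (w : ℕ → ℕ) (hw0 : w 0 = 0) (hwM : w (M + 1) = 0)
    (κ : Type*) [DecidableEq κ]
    (u v : BundleVertex M w κ) (p : (bundleGraph M w κ).Walk u v) :
    ∃ c ∈ p.support, c.val.2 <+: commonPrefix u.val.2 v.val.2 := by
  induction p with
  | nil =>
    exact ⟨_, List.mem_singleton_self _,
      prefix_commonPrefix _ _ _ (List.prefix_refl _) (List.prefix_refl _)⟩
  | @cons u x v h q ih =>
    obtain ⟨c, hc, hcp⟩ := ih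
    have hcx : c.val.2 <+: x.val.2 := hcp.trans (commonPrefix_prefix_left _ _)
    have hcv : c.val.2 <+: v.val.2 := hcp.trans (commonPrefix_prefix_right _ _)
    rcases h.2 with hux | hxu
    · -- u.2 <+: x.2
      rcases List.prefix_or_prefix_of_prefix hcx hux with hcu | huc
      · exact ⟨c, by simp [hc], prefix_commonPrefix _ _ _ hcu hcv⟩
      · exact ⟨u, by simp,
          prefix_commonPrefix _ _ _ (List.prefix_refl _) (huc.trans hcv)⟩
    · -- x.2 <+: u.2
      exact ⟨c, by simp [hc], prefix_commonPrefix _ _ _ (hcx.trans hxu) hcv⟩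
end

section
/- Fix sequences W = (w_r)_{r=0}^{M+1} and W' = (w'_r)_{r=0}^{M'+1} of nonnegative integers with w_0 = w_{M+1} = w'_0 = w'_{M'+1} = 0, and let W'' be the sequence of length (M+1)(M'+1)+1 with w''_0 = 0 and, for n ∈ {0,…,M}: w''_r = max{w_n, w_{n+1}} + w'_{r−n(M'+1)} for n(M'+1) < r < (n+1)(M'+1) and w''_r = w_{n+1} for r = (n+1)(M'+1). For each n ∈ {0,…,M} let K_n = max{w_n, w_{n+1}}. Then for all n ∈ {0,…,M}, all r with n(M'+1) < r ≤ (n+1)(M'+1), and all i ∈ ℕ₀: x''(r,i) = (M'+1)·x(n+1,i) if r = (n+1)(M'+1); x''(r,i) = (M'+1)·x(n,i) if r ≠ (n+1)(M'+1) and i ≤ K_n; and x''(r,i) = n(M'+1) + x'(r − n(M'+1), i − K_n) otherwise. Likewise y''(r,i) = (M'+1)·y(n+1,i) if r = (n+1)(M'+1) or i ≤ K_n, and y''(r,i) = n(M'+1) + y'(r − n(M'+1), i − K_n) otherwise. -/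
def xfun (w : ℕ → ℕ) (r i : ℕ) : ℕ := Nat.findGreatest (fun t => w t < i) r

noncomputable def yfun (T : ℕ) (w : ℕ → ℕ) (r i : ℕ) : ℕ :=
  if i = 0 then T else sInf {t : ℕ | r ≤ t ∧ t ≤ T ∧ w t < i}

private lemma xfun_le (w : ℕ → ℕ) (r i : ℕ) : xfun w r i ≤ r := Nat.findGreatest_le r

private lemma xfun_spec {w : ℕ → ℕ} (r : ℕ) {i : ℕ} (h0 : w 0 < i) : w (xfun w r i) < i :=
  Nat.findGreatest_spec (P := fun t => w t < i) (Nat.zero_le r) h0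

private lemma xfun_greatest {w : ℕ → ℕ} {r i t : ℕ} (h1 : xfun w r i < t) (h2 : t ≤ r) :
    ¬ w t < i :=
  Nat.findGreatest_is_greatest (P := fun t => w t < i) h1 h2

private lemma xfun_eq {w : ℕ → ℕ} {r i m : ℕ} (h1 : m ≤ r) (h2 : m ≠ 0 → w m < i)
    (h3 : ∀ t, m < t → t ≤ r → ¬ w t < i) : xfun w r i = m :=
  (Nat.findGreatest_eq_iff (P := fun t => w t < i)).mpr ⟨h1, h2, h3⟩

private lemma xfun_zero (w : ℕ → ℕ) (r : ℕ) : xfun w r 0 = 0 :=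
  xfun_eq (Nat.zero_le r) (fun h => absurd rfl h) (fun t _ _ h => absurd h (by omega))

private lemma sInf_eq_of {S : Set ℕ} {v : ℕ} (hv : v ∈ S) (hlb : ∀ t ∈ S, v ≤ t) :
    sInf S = v :=
  le_antisymm (Nat.sInf_le hv) (le_csInf ⟨v, hv⟩ hlb)

/-- **Corollary `x''`.** With `W''` the weight sequence of
`T_{W,κ} ⊘ T_{W',κ}` and `K_n = max{w_n, w_{n+1}}`, for all `n ∈ {0,…,M}`,
`r` with `n(M'+1) < r ≤ (n+1)(M'+1)`, and `i ∈ ℕ₀`, the functions `x''`, `y''` for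
`W''` are given in terms of `x, y` (for `W`) and `x', y'` (for `W'`) by the stated
case formulas. -/
theorem xfun_yfun_wOslash
    (M : ℕ) (w : ℕ → ℕ) (hw0 : w 0 = 0) (hwM : w (M + 1) = 0)
    (M' : ℕ) (w' : ℕ → ℕ) (hw'0 : w' 0 = 0) (hw'M : w' (M' + 1) = 0)
    (w'' : ℕ → ℕ) (hw''0 : w'' 0 = 0)
    (hw''mid : ∀ n ≤ M, ∀ r : ℕ, n * (M' + 1) < r → r < (n + 1) * (M' + 1) →
      w'' r = max (w n) (w (n + 1)) + w' (r - n * (M' + 1)))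
    (hw''top : ∀ n ≤ M, w'' ((n + 1) * (M' + 1)) = w (n + 1))
    (n : ℕ) (hn : n ≤ M) (r : ℕ) (hr1 : n * (M' + 1) < r)
    (hr2 : r ≤ (n + 1) * (M' + 1)) (i : ℕ) :
    -- formulas for x''
    ((r = (n + 1) * (M' + 1) →
        xfun w'' r i = (M' + 1) * xfun w (n + 1) i) ∧
      (r ≠ (n + 1) * (M' + 1) → i ≤ max (w n) (w (n + 1)) →
        xfun w'' r i = (M' + 1) * xfun w n i) ∧
      (r ≠ (n + 1) * (M' + 1) → max (w n) (w (n + 1)) < i →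
        xfun w'' r i
          = n * (M' + 1) + xfun w' (r - n * (M' + 1)) (i - max (w n) (w (n + 1))))) ∧
    -- formulas for y''
    (((r = (n + 1) * (M' + 1) ∨ i ≤ max (w n) (w (n + 1))) →
        yfun ((M + 1) * (M' + 1)) w'' r i = (M' + 1) * yfun (M + 1) w (n + 1) i) ∧
      (r ≠ (n + 1) * (M' + 1) → max (w n) (w (n + 1)) < i →
        yfun ((M + 1) * (M' + 1)) w'' r i
          = n * (M' + 1)
            + yfun (M' + 1) w' (r - n * (M' + 1)) (i - max (w n) (w (n + 1))))) := by
  have hmul_le : ∀ {a b : ℕ}, a ≤ b → a * (M' + 1) ≤ b * (M' + 1) :=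
    fun h => Nat.mul_le_mul_right _ h
  have hmul_lt : ∀ {a b : ℕ}, a * (M' + 1) < b * (M' + 1) → a < b :=
    fun h => lt_of_mul_lt_mul_right h (Nat.zero_le _)
  have hmul_le' : ∀ {a b : ℕ}, a * (M' + 1) ≤ b * (M' + 1) → a ≤ b :=
    fun h => Nat.le_of_mul_le_mul_right h (Nat.succ_pos _)
  have hlow : ∀ {a m s : ℕ}, s < M' + 1 → a * (M' + 1) < m * (M' + 1) + s → a ≤ m := by
    intro a m s hs h
    by_contra hc
    push_neg at hc
    have h2 : (m + 1) * (M' + 1) ≤ a * (M' + 1) := Nat.mul_le_mul_right _ hc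
    rw [add_mul, one_mul] at h2
    omega
  have hdecomp : ∀ t : ℕ, ∃ m s, t = m * (M' + 1) + s ∧ s < M' + 1 := fun t =>
    ⟨t / (M' + 1), t % (M' + 1), (Nat.div_add_mod' t (M' + 1)).symm,
      Nat.mod_lt _ (Nat.succ_pos _)⟩
  have hmulval : ∀ m ≤ M + 1, w'' (m * (M' + 1)) = w m := by
    intro m hm
    match m with
    | 0 => simpa [hw''0] using hw0.symm
    | Nat.succ k => exact hw''top k (by omega)
  have hmidval : ∀ m ≤ M, ∀ s, 0 < s → s < M' + 1 →
      w'' (m * (M' + 1) + s) = max (w m) (w (m + 1)) + w' s := by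
    intro m hm s hs1 hs2
    have h2 : m * (M' + 1) + s < (m + 1) * (M' + 1) := by rw [add_mul, one_mul]; omega
    have := hw''mid m hm (m * (M' + 1) + s) (by omega) h2
    simpa using this
  have htop : (n + 1) * (M' + 1) = n * (M' + 1) + (M' + 1) := by ring
  obtain ⟨s0, rfl⟩ : ∃ s0, r = n * (M' + 1) + s0 := ⟨r - n * (M' + 1), by omega⟩
  have hs0pos : 0 < s0 := by omega
  have hs0le : s0 ≤ M' + 1 := by omega
  have hsub : n * (M' + 1) + s0 - n * (M' + 1) = s0 := by omega
  constructor
  · refine ⟨?_, ?_, ?_⟩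
    · -- x'' at the top point
      intro hrt
      rcases Nat.eq_zero_or_pos i with rfl | hi
      · rw [xfun_zero, xfun_zero, mul_zero]
      · have ha1 : w (xfun w (n + 1) i) < i := xfun_spec (n + 1) (by omega)
        have ha2 : xfun w (n + 1) i ≤ n + 1 := xfun_le w (n + 1) i
        rw [hrt, mul_comm (M' + 1)]
        apply xfun_eq
        · exact hmul_le ha2
        · intro _
          rw [hmulval _ (by omega)]
          exact ha1
        · intro t h1 h2
          obtain ⟨m, s, rfl, hs⟩ := hdecomp t
          rcases Nat.eq_zero_or_pos s with rfl | hspos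
          · rw [add_zero] at h1 h2 ⊢
            have h3 : xfun w (n + 1) i < m := hmul_lt h1
            have h4 : m ≤ n + 1 := hmul_le' h2
            rw [hmulval m (by omega)]
            exact xfun_greatest h3 h4
          · have h3 : xfun w (n + 1) i ≤ m := hlow hs h1
            have h4 : m < n + 1 := hmul_lt (by omega : m * (M' + 1) < (n + 1) * (M' + 1))
            rw [hmidval m (by omega) s hspos hs]
            have h5 : i ≤ max (w m) (w (m + 1)) := by
              rcases eq_or_lt_of_le h3 with heq | h6
              · have := xfun_greatest (w := w) (r := n + 1) (i := i) (t := m + 1)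
                  (by omega) (by omega)
                exact le_max_of_le_right (not_lt.mp this)
              · have := xfun_greatest h6 (by omega)
                exact le_max_of_le_left (not_lt.mp this)
            omega
    · -- x'' in the interior, small i
      intro hrt hiK
      have hs0lt : s0 < M' + 1 := by omega
      rcases Nat.eq_zero_or_pos i with rfl | hi
      · rw [xfun_zero, xfun_zero, mul_zero]
      · have ha1 : w (xfun w n i) < i := xfun_spec n (by omega)
        have ha2 : xfun w n i ≤ n := xfun_le w n i
        rw [mul_comm (M' + 1)]
        apply xfun_eq
        · have := hmul_le ha2; omega
        · intro _
          rw [hmulval _ (by omega)]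
          exact ha1
        · intro t h1 h2
          obtain ⟨m, s, rfl, hs⟩ := hdecomp t
          rcases Nat.eq_zero_or_pos s with rfl | hspos
          · rw [add_zero] at h1 h2 ⊢
            have h3 : xfun w n i < m := hmul_lt h1
            have h4 : m ≤ n := by
              have h5 : m * (M' + 1) < (n + 1) * (M' + 1) := by omega
              have := hmul_lt h5; omega
            rw [hmulval m (by omega)]
            exact xfun_greatest h3 (by omega)
          · have h3 : xfun w n i ≤ m := hlow hs h1
            have h4 : m ≤ n := by
              have h5 : m * (M' + 1) < (n + 1) * (M' + 1) := by omega
              have := hmul_lt h5; omega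
            rw [hmidval m (by omega) s hspos hs]
            by_cases hmn : m = n
            · subst hmn
              omega
            · have h5 : i ≤ max (w m) (w (m + 1)) := by
                rcases eq_or_lt_of_le h3 with heq | h6
                · have := xfun_greatest (w := w) (r := n) (i := i) (t := m + 1)
                    (by omega) (by omega)
                  exact le_max_of_le_right (not_lt.mp this)
                · have := xfun_greatest h6 (by omega)
                  exact le_max_of_le_left (not_lt.mp this)
              omega
    · -- x'' in the interior, large i
      intro hrt hiK
      have hs0lt : s0 < M' + 1 := by omega
      rw [hsub]
      have hb1 : w' (xfun w' s0 (i - max (w n) (w (n + 1)))) < i - max (w n) (w (n + 1)) :=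
        xfun_spec s0 (by omega)
      have hb2 : xfun w' s0 (i - max (w n) (w (n + 1))) ≤ s0 :=
        xfun_le w' s0 (i - max (w n) (w (n + 1)))
      apply xfun_eq
      · omega
      · intro _
        rcases Nat.eq_zero_or_pos (xfun w' s0 (i - max (w n) (w (n + 1)))) with hb0 | hbpos
        · rw [hb0, add_zero, hmulval n (by omega)]
          have := le_max_left (w n) (w (n + 1))
          omega
        · rw [hmidval n hn _ hbpos (by omega)]
          omega
      · intro t h1 h2
        obtain ⟨m, s, rfl, hs⟩ := hdecomp t
        rcases Nat.eq_zero_or_pos s with rfl | hspos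
        · rw [add_zero] at h1 h2
          have hm1 : n < m := hmul_lt (by omega : n * (M' + 1) < m * (M' + 1))
          have hm2 : m < n + 1 := hmul_lt (by omega : m * (M' + 1) < (n + 1) * (M' + 1))
          omega
        · have h3 : n ≤ m := hlow hs (by omega)
          have h4 : m < n + 1 := hmul_lt (by omega : m * (M' + 1) < (n + 1) * (M' + 1))
          have hmn : m = n := by omega
          subst hmn
          have hss1 : xfun w' s0 (i - max (w m) (w (m + 1))) < s := by omega
          have hss2 : s ≤ s0 := by omega
          rw [hmidval m hn s hspos hs]
          have := xfun_greatest hss1 hss2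
          omega
  · constructor
    · -- y'' : top point or small i
      intro hcase
      unfold yfun
      rcases Nat.eq_zero_or_pos i with rfl | hi
      · rw [if_pos rfl, if_pos rfl, mul_comm]
      · rw [if_neg (by omega), if_neg (by omega)]
        have hne : {t : ℕ | n + 1 ≤ t ∧ t ≤ M + 1 ∧ w t < i}.Nonempty :=
          ⟨M + 1, ⟨by omega, le_rfl, by omega⟩⟩
        obtain ⟨c, hc⟩ : ∃ c, sInf {t : ℕ | n + 1 ≤ t ∧ t ≤ M + 1 ∧ w t < i} = c := ⟨_, rfl⟩
        rw [hc]
        obtain ⟨hc1, hc2, hc3⟩ : n + 1 ≤ c ∧ c ≤ M + 1 ∧ w c < i := hc ▸ Nat.sInf_mem hne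
        have hcmin : ∀ t, n + 1 ≤ t → t ≤ M + 1 → w t < i → c ≤ t := fun t h1 h2 h3 =>
          hc ▸ Nat.sInf_le ⟨h1, h2, h3⟩
        rw [mul_comm (M' + 1)]
        apply sInf_eq_of
        · refine ⟨?_, hmul_le hc2, ?_⟩
          · have := hmul_le hc1; omega
          · rw [hmulval c hc2]; exact hc3
        · intro t ht
          obtain ⟨ht1, ht2, ht3⟩ := ht
          by_contra hlt
          push_neg at hlt
          obtain ⟨m, s, rfl, hs⟩ := hdecomp t
          rcases Nat.eq_zero_or_pos s with rfl | hspos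
          · rw [add_zero] at ht1 ht3 hlt
            have hm1 : n < m := hmul_lt (by omega : n * (M' + 1) < m * (M' + 1))
            have hm2 : m < c := hmul_lt hlt
            rw [hmulval m (by omega)] at ht3
            have := hcmin m (by omega) (by omega) ht3
            omega
          · have hm1 : n ≤ m := hlow hs (by omega)
            have hm2 : m < c := hmul_lt (by omega : m * (M' + 1) < c * (M' + 1))
            rw [hmidval m (by omega) s hspos hs] at ht3
            by_cases hmn : m = n
            · subst hmn
              rcases hcase with hrt | hiK
              · omega
              · omega
            · have hwm : ¬ w m < i := fun h => absurd (hcmin m (by omega) (by omega) h) (by omega)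
              have := le_max_left (w m) (w (m + 1))
              omega
    · -- y'' : interior, large i
      intro hrt hiK
      have hs0lt : s0 < M' + 1 := by omega
      unfold yfun
      rw [if_neg (by omega), if_neg (by omega), hsub]
      have hne : {t : ℕ | s0 ≤ t ∧ t ≤ M' + 1 ∧ w' t < i - max (w n) (w (n + 1))}.Nonempty :=
        ⟨M' + 1, ⟨hs0le, le_rfl, by omega⟩⟩
      obtain ⟨d, hd⟩ :
          ∃ d, sInf {t : ℕ | s0 ≤ t ∧ t ≤ M' + 1 ∧ w' t < i - max (w n) (w (n + 1))} = d :=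
        ⟨_, rfl⟩
      rw [hd]
      obtain ⟨hd1, hd2, hd3⟩ : s0 ≤ d ∧ d ≤ M' + 1 ∧ w' d < i - max (w n) (w (n + 1)) :=
        hd ▸ Nat.sInf_mem hne
      have hdmin : ∀ t, s0 ≤ t → t ≤ M' + 1 → w' t < i - max (w n) (w (n + 1)) → d ≤ t :=
        fun t h1 h2 h3 => hd ▸ Nat.sInf_le ⟨h1, h2, h3⟩
      apply sInf_eq_of
      · refine ⟨by omega, ?_, ?_⟩
        · have := hmul_le (show n + 1 ≤ M + 1 by omega)
          omega
        · rcases eq_or_lt_of_le hd2 with rfl | hdlt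
          · rw [show n * (M' + 1) + (M' + 1) = (n + 1) * (M' + 1) from htop.symm,
              hw''top n hn]
            have := le_max_right (w n) (w (n + 1))
            omega
          · rw [hmidval n hn d (by omega) hdlt]
            omega
      · intro t ht
        obtain ⟨ht1, ht2, ht3⟩ := ht
        by_contra hlt
        push_neg at hlt
        obtain ⟨m, s, rfl, hs⟩ := hdecomp t
        rcases Nat.eq_zero_or_pos s with rfl | hspos
        · rw [add_zero] at ht1 hlt
          have hm1 : n < m := hmul_lt (by omega : n * (M' + 1) < m * (M' + 1))
          have := hmul_le (show n + 1 ≤ m by omega)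
          omega
        · have hm1 : n ≤ m := hlow hs (by omega)
          have hm2 : m < n + 1 := hmul_lt (by omega : m * (M' + 1) < (n + 1) * (M' + 1))
          have hmn : m = n := by omega
          subst hmn
          have hss1 : s0 ≤ s := by omega
          have hss2 : s < d := by omega
          have hws : ¬ w' s < i - max (w m) (w (m + 1)) :=
            fun h => absurd (hdmin s hss1 (by omega) h) (by omega)
          rw [hmidval m hn s hspos hs] at ht3
          omega
end

section
/- For every cardinality κ and every n ∈ ℕ, the complete κ-branching rooted tree of height n, equipped with its shortest-path metric, embeds isometrically as a subgraph into the κ-branching bundle graph T_{W,κ} with W = (0, 1, 2, …, n−1, n, n−1, …, 2, 1, 0); namely, the map sending a sequence A ∈ κ^{≤ n} (a vertex of the tree at level |A|) to the vertex (|A|, A) of T_{W,κ} is an isometric embedding. -/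
/-- The complete κ-branching rooted tree of height `n`: vertices are the sequences in
`κ` of length at most `n`, and two vertices are adjacent iff one is an initial segment
of the other and their lengths differ by `1`. -/
def treeGraph (n : ℕ) (κ : Type*) : SimpleGraph {l : List κ // l.length ≤ n} :=
  SimpleGraph.fromRel fun a b => a.val <+: b.val ∧ a.val.length + 1 = b.val.length

/-- The map sending a vertex `A` of the tree (at level `|A|`) to the vertex
`(|A|, A)` of `T_{W,κ}` with `W = (0, 1, …, n−1, n, n−1, …, 1, 0)`,
i.e. `M = 2n − 1` and `w_r = min{r, 2n − r}`. -/
def treeEmb (n : ℕ) (hn : 1 ≤ n) (κ : Type*) (A : {l : List κ // l.length ≤ n}) :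
    BundleVertex (2 * n - 1) (fun r => min r (2 * n - r)) κ :=
  ⟨(A.val.length, A.val), by
    have h := A.property
    refine ⟨by omega, ?_⟩
    show A.val.length = min A.val.length (2 * n - A.val.length)
    omega⟩

section Aux

variable {n : ℕ} {κ : Type*}

open SimpleGraph

private lemma treeAdj_iff_bundleAdj (n : ℕ) (hn : 1 ≤ n) (κ : Type*)
    (A B : {l : List κ // l.length ≤ n}) :
    (treeGraph n κ).Adj A B ↔
      (bundleGraph (2 * n - 1) (fun r => min r (2 * n - r)) κ).Adj
        (treeEmb n hn κ A) (treeEmb n hn κ B) := by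
  constructor
  · rintro ⟨hne, ⟨hp, hl⟩ | ⟨hp, hl⟩⟩
    · exact ⟨Or.inl hl, Or.inl hp⟩
    · exact ⟨Or.inr hl, Or.inr hp⟩
  · rintro ⟨h1, h2⟩
    simp only [bundleGraph, treeEmb] at *
    constructor
    · intro h; subst h; omega
    · rcases h2 with hp | hp
      · have := hp.length_le
        left; exact ⟨hp, by omega⟩
      · have := hp.length_le
        right; exact ⟨hp, by omega⟩

/-- The embedding as a graph homomorphism. -/
private def embHom (n : ℕ) (hn : 1 ≤ n) (κ : Type*) :
    treeGraph n κ →g bundleGraph (2 * n - 1) (fun r => min r (2 * n - r)) κ where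
  toFun := treeEmb n hn κ
  map_rel' h := (treeAdj_iff_bundleAdj n hn κ _ _).mp h

/-- The projection as a graph homomorphism. -/
private def projHom (n : ℕ) (hn : 1 ≤ n) (κ : Type*) :
    bundleGraph (2 * n - 1) (fun r => min r (2 * n - r)) κ →g treeGraph n κ where
  toFun v := ⟨v.val.2, by
    have h1 := v.property.1
    have h2 := v.property.2
    simp only at h2
    omega⟩
  map_rel' := by
    rintro ⟨⟨r, A⟩, hrA⟩ ⟨⟨s, B⟩, hsB⟩ ⟨h1, h2⟩
    simp only at h1 h2
    obtain ⟨hr, hA⟩ := hrA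
    obtain ⟨hs, hB⟩ := hsB
    simp only at hr hA hs hB
    have hlen : A.length + 1 = B.length ∨ B.length + 1 = A.length := by omega
    have hne : A ≠ B := by
      intro h; subst h; omega
    refine ⟨by simpa [Subtype.ext_iff] using hne, ?_⟩
    rcases h2 with hp | hp
    · left
      refine ⟨hp, ?_⟩
      show A.length + 1 = B.length
      have := hp.length_le
      omega
    · right
      refine ⟨hp, ?_⟩
      show B.length + 1 = A.length
      have := hp.length_le
      omega

private lemma tree_reachable_root (A : {l : List κ // l.length ≤ n}) :
    (treeGraph n κ).Reachable A ⟨[], by simp⟩ := by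
  obtain ⟨l, hl⟩ := A
  induction l using List.reverseRecOn with
  | nil => rfl
  | append_singleton l a ih =>
    have hl' : l.length ≤ n := by simp at hl; omega
    refine Reachable.trans ?_ (ih hl')
    apply SimpleGraph.Adj.reachable
    refine ⟨?_, Or.inr ⟨⟨[a], rfl⟩, by simp⟩⟩
    intro h
    have := congrArg (List.length ∘ Subtype.val) h
    simp at this

private lemma tree_reachable (A B : {l : List κ // l.length ≤ n}) :
    (treeGraph n κ).Reachable A B :=
  (tree_reachable_root A).trans (tree_reachable_root B).symm

private lemma hom_dist_le {V W : Type*} {G : SimpleGraph V} {H : SimpleGraph W}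
    (f : G →g H) {u v : V} (h : G.Reachable u v) :
    H.dist (f u) (f v) ≤ G.dist u v := by
  obtain ⟨p, hp⟩ := h.exists_walk_length_eq_dist
  calc H.dist (f u) (f v) ≤ (p.map f).length := SimpleGraph.dist_le _
    _ = G.dist u v := by rw [SimpleGraph.Walk.length_map, hp]

end Aux

/-- The complete κ-branching rooted tree of height `n` embeds
isometrically, as a subgraph, into the bundle graph `T_{W,κ}` with
`W = (0,1,2,…,n−1,n,n−1,…,2,1,0)`, via the map `A ↦ (|A|, A)`. -/
theorem treeGraph_isometric_into_bundleGraph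
    (n : ℕ) (hn : 1 ≤ n) (κ : Type*) :
    (∀ A B : {l : List κ // l.length ≤ n},
      (treeGraph n κ).Adj A B ↔
        (bundleGraph (2 * n - 1) (fun r => min r (2 * n - r)) κ).Adj
          (treeEmb n hn κ A) (treeEmb n hn κ B)) ∧
    (∀ A B : {l : List κ // l.length ≤ n},
      (treeGraph n κ).dist A B =
        (bundleGraph (2 * n - 1) (fun r => min r (2 * n - r)) κ).dist
          (treeEmb n hn κ A) (treeEmb n hn κ B)) := by
  refine ⟨treeAdj_iff_bundleAdj n hn κ, fun A B => ?_⟩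
  apply le_antisymm
  · have h := hom_dist_le (projHom n hn κ) ((tree_reachable A B).map (embHom n hn κ))
    have hA : projHom n hn κ (embHom n hn κ A) = A := rfl
    have hB : projHom n hn κ (embHom n hn κ B) = B := rfl
    rw [hA, hB] at h
    exact h
  · exact hom_dist_le (embHom n hn κ) (tree_reachable A B)
end

section
/- Let κ be a finite cardinality and let G = T_{W,κ} be a nontrivial bundle graph (i.e., max W ≥ 1, so G has a vertex of nonzero depth). Then for every uniformly convex Banach space X, the family {G^{⊘^k}}_{k=1}^∞ is not equi-bi-Lipschitzly embeddable into X; that is, sup_{k ∈ ℕ} c_X(G^{⊘^k}) = ∞, where c_X(M) denotes the infimum of distortions of bi-Lipschitz embeddings of the metric space M into X. -/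
def wOslash (M' : ℕ) (w w' : ℕ → ℕ) : ℕ → ℕ := fun r =>
  if r = 0 then 0
  else if (M' + 1) ∣ r then w (r / (M' + 1))
  else max (w (r / (M' + 1))) (w (r / (M' + 1) + 1)) + w' (r - (r / (M' + 1)) * (M' + 1))

/-- The weight sequence of `G^{⊘^{k+1}}` for `G = T_{W,κ}`:
`G^{⊘^1} = G`, `G^{⊘^{k+1}} = G^{⊘^k} ⊘ G`; `G^{⊘^{k+1}} = T_{wIter M w k, κ}`,
of height `(M+1)^{k+1}`. -/
def wIter (M : ℕ) (w : ℕ → ℕ) : ℕ → (ℕ → ℕ)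
  | 0 => w
  | k + 1 => wOslash M (wIter M w k) w


namespace BundleAux

variable {M : ℕ} {w : ℕ → ℕ}

lemma wIter_zero (hw0 : w 0 = 0) : ∀ k, wIter M w k 0 = 0
  | 0 => hw0
  | k+1 => by simp [wIter, wOslash]

lemma wIter_succ_mul (hw0 : w 0 = 0) (k m : ℕ) :
    wIter M w (k+1) ((M+1) * m) = wIter M w k m := by
  rcases Nat.eq_zero_or_pos m with rfl | hm
  · rw [Nat.mul_zero, wIter_zero hw0, wIter_zero hw0]
  · have h0 : (M+1) * m ≠ 0 := by positivity
    show wOslash M (wIter M w k) w ((M+1)*m) = _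
    rw [wOslash, if_neg h0, if_pos (dvd_mul_right _ _),
      Nat.mul_div_cancel_left m (Nat.succ_pos M)]

lemma wIter_pow_mul (hw0 : w 0 = 0) :
    ∀ i k m, i ≤ k → wIter M w k ((M+1)^i * m) = wIter M w (k - i) m := by
  intro i
  induction i with
  | zero => intro k m _; simp
  | succ i IH =>
    intro k m hik
    obtain ⟨k', rfl⟩ : ∃ k', k = k' + 1 := ⟨k - 1, by omega⟩
    have : (M+1)^(i+1) * m = (M+1) * ((M+1)^i * m) := by ring
    rw [this, wIter_succ_mul hw0, IH k' m (by omega)]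
    congr 1
    omega

lemma wIter_not_dvd (k r : ℕ) (h : ¬ (M+1) ∣ r) :
    wIter M w (k+1) r
      = max (wIter M w k (r/(M+1))) (wIter M w k (r/(M+1)+1)) + w (r % (M+1)) := by
  have hr : r ≠ 0 := by rintro rfl; exact h (dvd_zero _)
  show wOslash M (wIter M w k) w r = _
  rw [wOslash, if_neg hr, if_neg h]
  have hm : r - r / (M+1) * (M+1) = r % (M+1) := by
    have h1 := Nat.div_add_mod r (M+1)
    have h2 : (M+1) * (r / (M+1)) = r / (M+1) * (M+1) := Nat.mul_comm _ _
    omega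
  rw [hm]

lemma interior1 (hw0 : w 0 = 0) {i k q s : ℕ} (hik : i < k)
    (h1 : (M+1)*q < s) (h2 : s < (M+1)*(q+1)) :
    max (wIter M w k ((M+1)^(i+1) * q)) (wIter M w k ((M+1)^(i+1) * (q+1)))
      ≤ wIter M w k ((M+1)^i * s) := by
  have hndvd : ¬ (M+1) ∣ s := by
    rintro ⟨t, rfl⟩
    have hq : q < t := lt_of_mul_lt_mul_left h1 (Nat.zero_le _)
    have hq' : t < q + 1 := lt_of_mul_lt_mul_left h2 (Nat.zero_le _)
    omega
  rw [wIter_pow_mul hw0 i k s (by omega)]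
  obtain ⟨t, ht⟩ : ∃ t, k - i = t + 1 := ⟨k - i - 1, by omega⟩
  rw [ht, wIter_not_dvd t s hndvd]
  have hdiv : s / (M+1) = q := by
    have e1 : q * (M+1) = (M+1) * q := Nat.mul_comm _ _
    have e2 : (q+1) * (M+1) = (M+1) * (q+1) := Nat.mul_comm _ _
    exact Nat.div_eq_of_lt_le (by omega) (by omega)
  rw [hdiv, wIter_pow_mul hw0 (i+1) k q (by omega), wIter_pow_mul hw0 (i+1) k (q+1) (by omega)]
  have : k - (i+1) = t := by omega
  rw [this]
  exact Nat.le_add_right _ _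

lemma hierarchy (hw0 : w 0 = 0) (hM : 1 ≤ M) :
    ∀ i k q r, i ≤ k → (M+1)^i * q < r → r < (M+1)^i * (q+1) →
      max (wIter M w k ((M+1)^i * q)) (wIter M w k ((M+1)^i * (q+1)))
        ≤ wIter M w k r := by
  intro i
  induction i with
  | zero => intro k q r _ h1 h2; simp only [pow_zero, one_mul] at h1 h2; omega
  | succ i IH =>
    intro k q r hik h1 h2
    set g := (M+1)^i with hg
    have hgpos : 0 < g := pow_pos (Nat.succ_pos M) i
    have hsplit : (M+1)^(i+1) = g * (M+1) := by rw [hg, pow_succ]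
    by_cases hdvd : g ∣ r
    · obtain ⟨s, rfl⟩ := hdvd
      have h1' : (M+1)*q < s := by
        refine lt_of_mul_lt_mul_left (a := g) ?_ (Nat.zero_le _)
        calc g * ((M+1)*q) = (M+1)^(i+1) * q := by rw [hsplit]; ring
        _ < g * s := h1
      have h2' : s < (M+1)*(q+1) := by
        refine lt_of_mul_lt_mul_left (a := g) ?_ (Nat.zero_le _)
        calc g * s < (M+1)^(i+1) * (q+1) := h2
        _ = g * ((M+1)*(q+1)) := by rw [hsplit]; ring
      exact interior1 hw0 (by omega) h1' h2'
    · set s := r / g with hs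
      have hc1 : g * s = s * g := Nat.mul_comm _ _
      have hc2 : g * (s+1) = g * s + g := by ring
      have hdm : g * s + r % g = r := by rw [hs]; exact Nat.div_add_mod r g
      have hmlt : r % g < g := Nat.mod_lt r hgpos
      have hne : g * s ≠ r := fun hc => hdvd ⟨s, hc.symm⟩
      have hlo : g * s < r := by omega
      have hhi : r < g * (s+1) := by omega
      have hq1 : (M+1)*q ≤ s := by
        rw [hs, Nat.le_div_iff_mul_le hgpos]
        calc (M+1)*q*g = (M+1)^(i+1) * q := by rw [hsplit]; ring
        _ ≤ r := le_of_lt h1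
      have hq2 : s < (M+1)*(q+1) := by
        rw [hs, Nat.div_lt_iff_lt_mul hgpos]
        calc r < (M+1)^(i+1) * (q+1) := h2
        _ = (M+1)*(q+1)*g := by rw [hsplit]; ring
      have IHr := IH k s r (by omega) hlo hhi
      rcases eq_or_lt_of_le hq1 with heq | hlt
      · -- s = (M+1)*q : use s+1
        have h1'' : (M+1)*q < s + 1 := by omega
        have h2'' : s + 1 < (M+1)*(q+1) := by
          have : (M+1)*(q+1) = (M+1)*q + (M+1) := by ring
          omega
        have := interior1 hw0 (i := i) (k := k) (by omega) h1'' h2''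
        exact le_trans this (le_trans (le_max_right _ _) IHr)
      · have := interior1 hw0 (i := i) (k := k) (by omega) hlt hq2
        exact le_trans this (le_trans (le_max_left _ _) IHr)

end BundleAux


namespace BundleAux

section Graph

variable {N : ℕ} {V : ℕ → ℕ} {κ' : Type*}

instance [DecidableEq κ'] : DecidableEq (BundleVertex N V κ') := fun a b =>
  decidable_of_iff (a.1 = b.1) Subtype.ext_iff.symm

lemma walk_level {u v : BundleVertex N V κ'} (p : (bundleGraph N V κ').Walk u v) :
    u.1.1 ≤ v.1.1 + p.length ∧ v.1.1 ≤ u.1.1 + p.length := by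
  induction p with
  | nil => simp
  | cons h p ih =>
    obtain ⟨ih1, ih2⟩ := ih
    rcases h.1 with h1 | h1 <;>
      simp only [SimpleGraph.Walk.length_cons] <;> omega

lemma adj_getElem {c : ℕ} {u v : BundleVertex N V κ'}
    (h : (bundleGraph N V κ').Adj u v) (hu : c < u.1.2.length) (hv : c < v.1.2.length) :
    u.1.2[c]? = v.1.2[c]? := by
  rcases h.2 with hp | hp
  · rw [List.getElem?_eq_getElem hu, List.getElem?_eq_getElem hv, hp.getElem hu]
  · rw [List.getElem?_eq_getElem hu, List.getElem?_eq_getElem hv, hp.getElem hv]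

lemma walk_entry {c : ℕ} : ∀ {u v : BundleVertex N V κ'}
    (p : (bundleGraph N V κ').Walk u v),
    (∀ x ∈ p.support, c < x.1.2.length) → u.1.2[c]? = v.1.2[c]? := by
  intro u v p
  induction p with
  | nil => intro _; rfl
  | @cons u x v h p ih =>
    intro hall
    have h1 : c < u.1.2.length := hall u (SimpleGraph.Walk.start_mem_support _)
    have h2 : c < x.1.2.length := by
      refine hall x ?_
      simp [SimpleGraph.Walk.support_cons]
    refine (adj_getElem h h1 h2).trans (ih ?_)
    intro y hy
    exact hall y (by simp [SimpleGraph.Walk.support_cons, hy])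

lemma walk_length_branch [DecidableEq κ'] {c d : ℕ} {a b : BundleVertex N V κ'}
    (hlev : a.1.1 = b.1.1)
    (hne : a.1.2[c]? ≠ b.1.2[c]?)
    (hfar : ∀ x : BundleVertex N V κ', x.1.2.length ≤ c →
      d + x.1.1 ≤ a.1.1 ∨ a.1.1 + d ≤ x.1.1)
    (p : (bundleGraph N V κ').Walk a b) : 2 * d ≤ p.length := by
  by_cases hall : ∀ x ∈ p.support, c < x.1.2.length
  · exact absurd (walk_entry p hall) hne
  · push_neg at hall
    obtain ⟨x, hx, hxc⟩ := hall
    have hfx := hfar x (by omega)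
    have h1 := walk_level (p.takeUntil x hx)
    have h2 := walk_level (p.dropUntil x hx)
    have hlen := congrArg SimpleGraph.Walk.length (p.take_spec hx)
    rw [SimpleGraph.Walk.length_append] at hlen
    omega

def listOf (σ : ℕ → κ') (n : ℕ) : List κ' := (List.range n).map σ

@[simp] lemma listOf_length (σ : ℕ → κ') (n : ℕ) : (listOf σ n).length = n := by
  simp [listOf]

lemma listOf_getElem?_lt (σ : ℕ → κ') {c n : ℕ} (h : c < n) :
    (listOf σ n)[c]? = some (σ c) := by
  simp [listOf, List.getElem?_range h]

lemma listOf_prefix (σ : ℕ → κ') {m n : ℕ} (h : m ≤ n) :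
    listOf σ m <+: listOf σ n := by
  have he : listOf σ m = (listOf σ n).take m := by
    apply List.ext_getElem?
    intro i
    by_cases hi : i < m
    · rw [listOf_getElem?_lt σ hi, List.getElem?_take_of_lt hi, listOf_getElem?_lt σ (by omega)]
    · rw [List.getElem?_eq_none (by simp; omega), List.getElem?_eq_none (by simp; omega)]
  rw [he]
  exact List.take_prefix _ _

lemma listOf_getD (L : List κ') (z : κ') {n : ℕ} (h : n ≤ L.length) :
    listOf (fun i => L.getD i z) n = L.take n := by
  apply List.ext_getElem?
  intro i
  by_cases hi : i < n
  · rw [listOf_getElem?_lt _ hi, List.getElem?_take_of_lt hi,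
      List.getElem?_eq_getElem (show i < L.length by omega)]
    exact congrArg some (List.getD_eq_getElem L z (show i < L.length by omega))
  · rw [List.getElem?_eq_none (by simp; omega), List.getElem?_eq_none (by simp; omega)]

lemma listOf_congr {σ τ : ℕ → κ'} {n : ℕ} (h : ∀ i < n, σ i = τ i) :
    listOf σ n = listOf τ n := by
  apply List.ext_getElem?
  intro i
  by_cases hi : i < n
  · rw [listOf_getElem?_lt _ hi, listOf_getElem?_lt _ hi, h i hi]
  · rw [List.getElem?_eq_none (by simp; omega), List.getElem?_eq_none (by simp; omega)]

def vert (N : ℕ) (V : ℕ → ℕ) (σ : ℕ → κ') (r : ℕ) (hr : r ≤ N + 1) :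
    BundleVertex N V κ' := ⟨(r, listOf σ (V r)), hr, listOf_length σ _⟩

lemma vert_adj (σ : ℕ → κ') {r : ℕ} (hr : r + 1 ≤ N + 1) :
    (bundleGraph N V κ').Adj (vert N V σ r (by omega)) (vert N V σ (r+1) hr) := by
  refine ⟨Or.inl rfl, ?_⟩
  rcases le_total (V r) (V (r+1)) with h | h
  · exact Or.inl (listOf_prefix σ h)
  · exact Or.inr (listOf_prefix σ h)

lemma vert_reachable (σ : ℕ → κ') {r s : ℕ} (hrs : r ≤ s) (hr : r ≤ N + 1) (hs : s ≤ N + 1) :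
    (bundleGraph N V κ').Reachable (vert N V σ r hr) (vert N V σ s hs) := by
  induction s, hrs using Nat.le_induction with
  | base => rfl
  | succ s hrs ih =>
    exact (ih (by omega)).trans (vert_adj σ hs).reachable

end Graph

end BundleAux


namespace BundleAux

lemma vert_congr {N : ℕ} {V : ℕ → ℕ} {κ' : Type*} (σ : ℕ → κ') {r r' : ℕ} (h : r = r')
    (hr : r ≤ N + 1) (hr' : r' ≤ N + 1) :
    vert N V σ r hr = vert N V σ r' hr' := by subst h; rfl

end BundleAux


namespace BundleAux

lemma uc_comb_half {X : Type*} [NormedAddCommGroup X] [NormedSpace ℝ X] {δ ε : ℝ}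
    (hUC : ∀ ⦃x : X⦄, ‖x‖ ≤ 1 → ∀ ⦃y : X⦄, ‖y‖ ≤ 1 → ε ≤ ‖x - y‖ → ‖x + y‖ ≤ 2 - δ)
    {x y : X} {α β : ℝ} (hα : 0 < α) (hβ : 0 < β) (hab : α ≤ β)
    (hx : ‖x‖ ≤ α) (hy : ‖y‖ ≤ β)
    (hxy : ε ≤ ‖α⁻¹ • x - β⁻¹ • y‖) :
    ‖x + y‖ ≤ α + β - α * δ := by
  have hx' : ‖α⁻¹ • x‖ ≤ 1 := by
    rw [norm_smul, norm_inv, Real.norm_of_nonneg hα.le]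
    calc α⁻¹ * ‖x‖ ≤ α⁻¹ * α := by
          exact mul_le_mul_of_nonneg_left hx (inv_nonneg.mpr hα.le)
    _ = 1 := inv_mul_cancel₀ hα.ne'
  have hy' : ‖β⁻¹ • y‖ ≤ 1 := by
    rw [norm_smul, norm_inv, Real.norm_of_nonneg hβ.le]
    calc β⁻¹ * ‖y‖ ≤ β⁻¹ * β := by
          exact mul_le_mul_of_nonneg_left hy (inv_nonneg.mpr hβ.le)
    _ = 1 := inv_mul_cancel₀ hβ.ne'
  have hsum : ‖α⁻¹ • x + β⁻¹ • y‖ ≤ 2 - δ := hUC hx' hy' hxy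
  have e1 : α • (α⁻¹ • x) = x := by
    rw [smul_smul, mul_inv_cancel₀ hα.ne', one_smul]
  have e2 : α • (β⁻¹ • y) + (β - α) • (β⁻¹ • y) = y := by
    rw [← add_smul, show α + (β - α) = β by ring, smul_smul, mul_inv_cancel₀ hβ.ne', one_smul]
  have hid : x + y = α • (α⁻¹ • x + β⁻¹ • y) + (β - α) • (β⁻¹ • y) := by
    rw [smul_add, e1, add_assoc, e2]
  calc ‖x + y‖ = ‖α • (α⁻¹ • x + β⁻¹ • y) + (β - α) • (β⁻¹ • y)‖ := by rw [← hid]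
  _ ≤ ‖α • (α⁻¹ • x + β⁻¹ • y)‖ + ‖(β - α) • (β⁻¹ • y)‖ := norm_add_le _ _
  _ ≤ α * (2 - δ) + (β - α) * 1 := by
      apply add_le_add
      · rw [norm_smul, Real.norm_of_nonneg hα.le]
        exact mul_le_mul_of_nonneg_left hsum hα.le
      · rw [norm_smul, Real.norm_of_nonneg (by linarith : (0:ℝ) ≤ β - α)]
        exact mul_le_mul_of_nonneg_left hy' (by linarith)
  _ = α + β - α * δ := by ring

lemma uc_comb {X : Type*} [NormedAddCommGroup X] [NormedSpace ℝ X] {δ ε : ℝ}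
    (hUC : ∀ ⦃x : X⦄, ‖x‖ ≤ 1 → ∀ ⦃y : X⦄, ‖y‖ ≤ 1 → ε ≤ ‖x - y‖ → ‖x + y‖ ≤ 2 - δ)
    {x y : X} {α β : ℝ} (hα : 0 < α) (hβ : 0 < β)
    (hx : ‖x‖ ≤ α) (hy : ‖y‖ ≤ β)
    (hxy : ε ≤ ‖α⁻¹ • x - β⁻¹ • y‖) :
    ‖x + y‖ ≤ α + β - min α β * δ := by
  rcases le_total α β with hab | hab
  · rw [min_eq_left hab]
    exact uc_comb_half hUC hα hβ hab hx hy hxy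
  · rw [min_eq_right hab]
    have hxy' : ε ≤ ‖β⁻¹ • y - α⁻¹ • x‖ := by rwa [norm_sub_rev]
    have := uc_comb_half hUC hβ hα hab hy hx hxy'
    rw [add_comm y x] at this
    linarith

end BundleAux

open BundleAux

set_option maxHeartbeats 1000000

/-- If `G = T_{W,κ}` is a nontrivial finitely branching bundle graph
(`max W ≥ 1`, so `G` has a vertex of nonzero depth, and the branching `κ` is genuine,
i.e. `κ ≥ 2`), then for every uniformly convex Banach space `X` the family
`{G^{⊘^k}}_{k≥1}` is **not** equi-bi-Lipschitzly embeddable into `X`: there is no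
uniform bound `K` on the distortions of bi-Lipschitz embeddings of all `G^{⊘^k}`
into `X`. -/
theorem not_equi_biLipschitz_into_uniformConvex
    (M : ℕ) (w : ℕ → ℕ) (hw0 : w 0 = 0) (hwM : w (M + 1) = 0)
    (hW : 1 ≤ (Finset.range (M + 2)).sup w)
    (κ : ℕ) (hκ : 2 ≤ κ)
    (X : Type*) [NormedAddCommGroup X] [NormedSpace ℝ X] [CompleteSpace X]
    [UniformConvexSpace X] :
    ¬ ∃ K : ℝ, ∀ k : ℕ,
      ∃ ψ : BundleVertex ((M + 1) ^ (k + 1) - 1) (wIter M w k) (Fin κ) → X,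
        ∃ C₁ C₂ : ℝ, 0 < C₁ ∧ 0 < C₂ ∧ C₂ / C₁ ≤ K ∧
          ∀ u v : BundleVertex ((M + 1) ^ (k + 1) - 1) (wIter M w k) (Fin κ),
            C₁ * ((bundleGraph ((M + 1) ^ (k + 1) - 1) (wIter M w k)
                  (Fin κ)).dist u v : ℝ) ≤ ‖ψ u - ψ v‖ ∧
              ‖ψ u - ψ v‖ ≤
                C₂ * ((bundleGraph ((M + 1) ^ (k + 1) - 1) (wIter M w k)
                    (Fin κ)).dist u v : ℝ) := by
  classical
  rintro ⟨K, hK⟩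
  obtain ⟨κ'', rfl⟩ : ∃ t, κ = t + 2 := ⟨κ - 2, by omega⟩
  -- pick a level rs with weight ≥ 1
  rw [Finset.le_sup_iff (by norm_num : (0:ℕ) < 1)] at hW
  obtain ⟨rs, hrsmem, hrs⟩ := hW
  rw [Finset.mem_range] at hrsmem
  have hrs0 : rs ≠ 0 := by rintro rfl; rw [hw0] at hrs; omega
  have hrsM : rs ≤ M := by
    by_contra h
    have : rs = M + 1 := by omega
    rw [this, hwM] at hrs; omega
  have hrs1 : 1 ≤ rs := by omega
  have hM : 1 ≤ M := by omega
  -- uniform convexity data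
  set K' : ℝ := max K 1 with hK'def
  have hK'1 : (1:ℝ) ≤ K' := le_max_right _ _
  have hK'pos : (0:ℝ) < K' := by linarith
  have hMR : (1:ℝ) ≤ (M:ℝ) := by exact_mod_cast hM
  set ε₀ : ℝ := 1 / (((M:ℝ)+1) * K') with hε₀def
  have hε₀pos : 0 < ε₀ := by rw [hε₀def]; positivity
  obtain ⟨δ₀, hδ₀pos, hUC0⟩ := exists_forall_closed_ball_dist_add_le_two_sub X hε₀pos
  set δ₁ := min δ₀ 1 with hδ₁def
  have hδ₁pos : 0 < δ₁ := lt_min hδ₀pos one_pos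
  have hδ₁le : δ₁ ≤ 1 := min_le_right _ _
  have hUC : ∀ ⦃x : X⦄, ‖x‖ ≤ 1 → ∀ ⦃y : X⦄, ‖y‖ ≤ 1 → ε₀ ≤ ‖x - y‖ → ‖x + y‖ ≤ 2 - δ₁ :=
    fun x hx y hy hxy => le_trans (hUC0 hx hy hxy) (by
      have := min_le_left δ₀ 1; linarith)
  set δ' : ℝ := δ₁ / ((M:ℝ)+1) with hδ'def
  have hδ'pos : 0 < δ' := by rw [hδ'def]; positivity
  have hδ'lt : δ' < 1 := by
    rw [hδ'def, div_lt_one (by linarith)]; linarith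
  have h1δ'0 : 0 ≤ 1 - δ' := by linarith
  have hδ'M : δ' * ((M:ℝ)+1) = δ₁ := by
    rw [hδ'def]; field_simp
  obtain ⟨n, hn⟩ := exists_pow_lt_of_lt_one (show (0:ℝ) < 1/K' by positivity)
    (show 1 - δ' < 1 by linarith)
  have hKn := hK n
  set Nk := (M+1)^(n+1) - 1 with hNkdef
  set Vk := wIter M w n with hVkdef
  have hpow1 : 1 ≤ (M+1)^(n+1) := Nat.one_le_pow _ _ (by omega)
  have hNk1 : Nk + 1 = (M+1)^(n+1) := by omega
  set Gr := bundleGraph Nk Vk (Fin (κ''+2)) with hGrdef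
  obtain ⟨ψ, C₁, C₂, hC₁, hC₂, hKle, hψ⟩ := hKn
  have hK'2 : C₂ ≤ K' * C₁ := by
    have h : C₂ / C₁ ≤ K' := le_trans hKle (le_max_left _ _)
    rw [div_le_iff₀ hC₁] at h; linarith
  -- the main inductive estimate
  have key : ∀ j, j ≤ n + 1 → ∀ q (u v : BundleVertex Nk Vk (Fin (κ''+2))),
      u.1.1 = (M+1)^j * q → v.1.1 = (M+1)^j * (q+1) →
      (u.1.2 <+: v.1.2 ∨ v.1.2 <+: u.1.2) →
      ‖ψ u - ψ v‖ ≤ (1-δ')^j * C₂ * (((M+1:ℕ)):ℝ)^j := by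
    intro j
    induction j with
    | zero =>
      intro _ q u v hu hv hcomp
      rw [pow_zero, one_mul] at hu hv
      have hadj : Gr.Adj u v := ⟨Or.inl (by omega), hcomp⟩
      have hd : Gr.dist u v = 1 := SimpleGraph.dist_eq_one_iff_adj.mpr hadj
      have h2 := (hψ u v).2
      rw [hd] at h2
      simpa using h2
    | succ j IH =>
      intro hj q u v hu hv hcomp
      have hjk : j ≤ n + 1 := by omega
      have hjn : j ≤ n := by omega
      -- chain estimate along a vertical stream
      have chain : ∀ (τ : ℕ → Fin (κ''+2)) (m d : ℕ) (hm : (M+1)^j * m ≤ Nk + 1)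
          (hd : (M+1)^j * (m+d) ≤ Nk + 1),
          ‖ψ (vert Nk Vk τ ((M+1)^j*m) hm) - ψ (vert Nk Vk τ ((M+1)^j*(m+d)) hd)‖
            ≤ d * ((1-δ')^j * C₂ * (((M+1:ℕ)):ℝ)^j) := by
        intro τ m d
        induction d with
        | zero =>
          intro hm hd
          rw [vert_congr τ (show (M+1)^j*(m+0) = (M+1)^j*m by ring) hd hm]
          simp
        | succ d ihd =>
          intro hm hd
          have hmid : (M+1)^j * (m+d) ≤ Nk + 1 :=
            le_trans (Nat.mul_le_mul_left _ (by omega)) hd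
          have tri : ‖ψ (vert Nk Vk τ ((M+1)^j*m) hm) - ψ (vert Nk Vk τ ((M+1)^j*(m+(d+1))) hd)‖
              ≤ ‖ψ (vert Nk Vk τ ((M+1)^j*m) hm) - ψ (vert Nk Vk τ ((M+1)^j*(m+d)) hmid)‖
                + ‖ψ (vert Nk Vk τ ((M+1)^j*(m+d)) hmid) - ψ (vert Nk Vk τ ((M+1)^j*(m+(d+1))) hd)‖ := by
            have := dist_triangle (ψ (vert Nk Vk τ ((M+1)^j*m) hm))
              (ψ (vert Nk Vk τ ((M+1)^j*(m+d)) hmid)) (ψ (vert Nk Vk τ ((M+1)^j*(m+(d+1))) hd))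
            simpa [dist_eq_norm] using this
          have hlast : ‖ψ (vert Nk Vk τ ((M+1)^j*(m+d)) hmid)
              - ψ (vert Nk Vk τ ((M+1)^j*(m+(d+1))) hd)‖
              ≤ (1-δ')^j * C₂ * (((M+1:ℕ)):ℝ)^j := by
            apply IH hjk (m+d) _ _ rfl rfl
            rcases le_total (Vk ((M+1)^j*(m+d))) (Vk ((M+1)^j*(m+(d+1)))) with h | h
            · exact Or.inl (listOf_prefix τ h)
            · exact Or.inr (listOf_prefix τ h)
          have ih := ihd hm hmid
          have hcast : ((d+1 : ℕ):ℝ) = (d:ℝ) + 1 := by push_cast; ring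
          rw [hcast]
          calc ‖ψ (vert Nk Vk τ ((M+1)^j*m) hm) - ψ (vert Nk Vk τ ((M+1)^j*(m+(d+1))) hd)‖
              ≤ _ + _ := tri
          _ ≤ (d:ℝ) * ((1-δ')^j * C₂ * (((M+1:ℕ)):ℝ)^j)
                + (1-δ')^j * C₂ * (((M+1:ℕ)):ℝ)^j := add_le_add ih hlast
          _ = ((d:ℝ)+1) * ((1-δ')^j * C₂ * (((M+1:ℕ)):ℝ)^j) := by ring
      -- geometric setup
      have hgpos : 0 < (M+1)^j := pow_pos (by omega : 0 < M+1) j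
      have hsplit : (M+1)^(j+1) = (M+1)^j*(M+1) := pow_succ (M+1) j
      have hulev : u.1.1 = (M+1)^j * ((M+1)*q) := by rw [hu, hsplit]; ring
      have hvlev : v.1.1 = (M+1)^j * ((M+1)*q + (M+1)) := by rw [hv, hsplit]; ring
      have hvle : v.1.1 ≤ Nk + 1 := v.2.1
      have hule : u.1.1 ≤ Nk + 1 := u.2.1
      have hρle : (M+1)^j * ((M+1)*q + rs) ≤ Nk + 1 := by
        refine le_trans ?_ hvle
        rw [hvlev]
        exact Nat.mul_le_mul_left _ (by omega)
      -- the two streams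
      set L := if u.1.2.length ≤ v.1.2.length then v.1.2 else u.1.2 with hLdef
      have hprefA : u.1.2 <+: L ∧ v.1.2 <+: L := by
        rcases hcomp with h | h
        · have hlen := h.length_le
          rw [hLdef, if_pos hlen]; exact ⟨h, List.prefix_refl _⟩
        · have hlen := h.length_le
          by_cases hc : u.1.2.length ≤ v.1.2.length
          · have hEq : v.1.2 = u.1.2 := h.sublist.eq_of_length (by omega)
            rw [hLdef, if_pos hc, hEq]
            exact ⟨List.prefix_refl _, List.prefix_refl _⟩
          · rw [hLdef, if_neg hc]; exact ⟨List.prefix_refl _, h⟩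
      have hcA : u.1.2.length ≤ L.length := hprefA.1.length_le
      have hcB : v.1.2.length ≤ L.length := hprefA.2.length_le
      have hcmax : L.length = max u.1.2.length v.1.2.length := by
        rw [hLdef]; split_ifs <;> omega
      set c := L.length with hcdef
      set σ : ℕ → Fin (κ''+2) := fun i => L.getD i 0 with hσdef
      set σ' : ℕ → Fin (κ''+2) := fun i => if i = c then 1 else σ i with hσ'def
      have hσA : listOf σ u.1.2.length = u.1.2 := by
        rw [hσdef, listOf_getD L 0 hcA]
        exact (List.prefix_iff_eq_take.mp hprefA.1).symm
      have hσB : listOf σ v.1.2.length = v.1.2 := by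
        rw [hσdef, listOf_getD L 0 hcB]
        exact (List.prefix_iff_eq_take.mp hprefA.2).symm
      have hσ'σ : ∀ nn, nn ≤ c → listOf σ' nn = listOf σ nn := by
        intro nn hnn
        apply listOf_congr
        intro i hi
        rw [hσ'def]
        simp only
        rw [if_neg (by omega)]
      have hσ'A : listOf σ' u.1.2.length = u.1.2 := by
        rw [hσ'σ _ hcA]; exact hσA
      have hσ'B : listOf σ' v.1.2.length = v.1.2 := by
        rw [hσ'σ _ hcB]; exact hσB
      have hu_eq : u = vert Nk Vk σ u.1.1 hule := by
        apply Subtype.ext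
        show u.1 = (u.1.1, listOf σ (Vk u.1.1))
        rw [← u.2.2, hσA]
      have hu_eq' : u = vert Nk Vk σ' u.1.1 hule := by
        apply Subtype.ext
        show u.1 = (u.1.1, listOf σ' (Vk u.1.1))
        rw [← u.2.2, hσ'A]
      have hv_eq : v = vert Nk Vk σ v.1.1 hvle := by
        apply Subtype.ext
        show v.1 = (v.1.1, listOf σ (Vk v.1.1))
        rw [← v.2.2, hσB]
      have hv_eq' : v = vert Nk Vk σ' v.1.1 hvle := by
        apply Subtype.ext
        show v.1 = (v.1.1, listOf σ' (Vk v.1.1))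
        rw [← v.2.2, hσ'B]
      -- weight at the branching level is large
      have hcVρ : c < Vk ((M+1)^j * ((M+1)*q + rs)) := by
        have hE : Vk ((M+1)^j * ((M+1)*q + rs)) = wIter M w (n - j) ((M+1)*q + rs) := by
          rw [hVkdef]; exact wIter_pow_mul hw0 j n _ (by omega)
        have hnd : ¬ (M+1) ∣ ((M+1)*q + rs) := by
          rintro ⟨t, ht⟩
          rcases lt_trichotomy q t with h | h | h
          · have := Nat.mul_le_mul_left (M+1) (show q+1 ≤ t from h)
            have he : (M+1)*(q+1) = (M+1)*q + (M+1) := by ring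
            omega
          · subst h; omega
          · have := Nat.mul_le_mul_left (M+1) (show t ≤ q from h.le)
            have : (M+1)*t ≤ (M+1)*q := this
            omega
        have hediv : ((M+1)*q + rs) / (M+1) = q := by
          rw [Nat.mul_add_div (by omega), Nat.div_eq_of_lt (by omega)]
          omega
        have hemod : ((M+1)*q + rs) % (M+1) = rs := by
          rw [Nat.mul_add_mod]
          exact Nat.mod_eq_of_lt (by omega)
        rcases Nat.lt_or_ge j n with hjn' | hjn'
        · have hnj : n - j = (n - j - 1) + 1 := by omega
          rw [hE, hnj, wIter_not_dvd _ _ hnd, hediv, hemod]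
          have hAlen : u.1.2.length = wIter M w (n-j-1) q := by
            calc u.1.2.length = Vk u.1.1 := u.2.2
            _ = Vk ((M+1)^(j+1) * q) := by rw [hu]
            _ = wIter M w (n - (j+1)) q := by
                rw [hVkdef]; exact wIter_pow_mul hw0 (j+1) n q (by omega)
            _ = wIter M w (n-j-1) q := by congr 1 <;> omega
          have hBlen : v.1.2.length = wIter M w (n-j-1) (q+1) := by
            calc v.1.2.length = Vk v.1.1 := v.2.2
            _ = Vk ((M+1)^(j+1) * (q+1)) := by rw [hv]
            _ = wIter M w (n - (j+1)) (q+1) := by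
                rw [hVkdef]; exact wIter_pow_mul hw0 (j+1) n (q+1) (by omega)
            _ = wIter M w (n-j-1) (q+1) := by congr 1 <;> omega
          rw [hcmax, hAlen, hBlen]
          omega
        · -- j = n, so q = 0 and both endpoint weights vanish
          have hjn2 : j = n := by omega
          have hq0 : q = 0 := by
            have h1 := hvle
            rw [hv, hNk1, hjn2] at h1
            have h2 : (M+1)^(n+1) * (q+1) ≤ (M+1)^(n+1) * 1 := by
              have h3 : (M+1)^(n+1) * 1 = (M+1)^(n+1) := by ring
              omega
            have h4 := Nat.le_of_mul_le_mul_left h2 (by omega : 0 < (M+1)^(n+1))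
            omega
          have hAlen : u.1.2.length = 0 := by
            have : u.1.1 = 0 := by rw [hu, hq0]; ring
            rw [u.2.2, this, hVkdef, wIter_zero hw0]
          have hBlen : v.1.2.length = 0 := by
            have hvl : v.1.1 = (M+1)^n * (M+1) := by
              rw [hv, hq0, hjn2]; ring
            rw [v.2.2, hvl, hVkdef, wIter_pow_mul hw0 n n _ (le_refl n), Nat.sub_self]
            exact hwM
          have hc0 : c = 0 := by rw [hcmax]; omega
          rw [hc0, hE, hjn2, hq0, Nat.sub_self]
          have he : (M+1)*0 + rs = rs := by ring
          rw [he]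
          exact hrs
      -- the far-away condition for branching
      have hfar : ∀ x : BundleVertex Nk Vk (Fin (κ''+2)), x.1.2.length ≤ c →
          (M+1)^j + x.1.1 ≤ (M+1)^j * ((M+1)*q + rs) ∨
          (M+1)^j * ((M+1)*q + rs) + (M+1)^j ≤ x.1.1 := by
        intro x hxc
        by_contra hcon2
        push_neg at hcon2
        obtain ⟨h1, h2⟩ := hcon2
        have hVx : Vk x.1.1 ≤ c := by
          have := x.2.2; omega
        set e := (M+1)*q + rs with hedef
        have he1 : 1 ≤ e := by omega
        rcases lt_trichotomy x.1.1 ((M+1)^j * e) with hlt | heq | hgt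
        · have hge : (M+1)^j * e = (M+1)^j*(e-1) + (M+1)^j := by
            calc (M+1)^j * e = (M+1)^j*((e-1)+1) := by rw [Nat.sub_add_cancel he1]
            _ = (M+1)^j*(e-1) + (M+1)^j := by ring
          have hh := hierarchy hw0 hM j n (e-1) x.1.1 (by omega) (by omega)
            (by rw [Nat.sub_add_cancel he1]; omega)
          rw [Nat.sub_add_cancel he1] at hh
          have : Vk ((M+1)^j * e) ≤ Vk x.1.1 := le_trans (le_max_right _ _) hh
          omega
        · rw [← heq] at hcVρ; omega
        · have hge : (M+1)^j * (e+1) = (M+1)^j*e + (M+1)^j := by ring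
          have hh := hierarchy hw0 hM j n e x.1.1 (by omega) (by omega) (by omega)
          have : Vk ((M+1)^j * e) ≤ Vk x.1.1 := le_trans (le_max_left _ _) hh
          omega
      -- the two branching vertices
      set a := vert Nk Vk σ ((M+1)^j * ((M+1)*q + rs)) hρle with hadef
      set b := vert Nk Vk σ' ((M+1)^j * ((M+1)*q + rs)) hρle with hbdef
      have hσc : σ c = 0 := by
        rw [hσdef]
        exact List.getD_eq_default _ _ (le_of_eq hcdef.symm)
      have hσ'c : σ' c = 1 := by rw [hσ'def]; simp
      have hne : a.1.2[c]? ≠ b.1.2[c]? := by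
        show (listOf σ (Vk ((M+1)^j * ((M+1)*q + rs))))[c]? ≠
          (listOf σ' (Vk ((M+1)^j * ((M+1)*q + rs))))[c]?
        rw [listOf_getElem?_lt σ hcVρ, listOf_getElem?_lt σ' hcVρ, hσc, hσ'c]
        intro hcon2
        have := Option.some.inj hcon2
        exact Fin.zero_ne_one' this
      have hreach_ab : Gr.Reachable a b := by
        have hur : u.1.1 ≤ (M+1)^j * ((M+1)*q + rs) := by
          rw [hulev]; exact Nat.mul_le_mul_left _ (by omega)
        have r1 : Gr.Reachable (vert Nk Vk σ u.1.1 hule) a :=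
          vert_reachable σ hur hule hρle
        have r2 : Gr.Reachable (vert Nk Vk σ' u.1.1 hule) b :=
          vert_reachable σ' hur hule hρle
        rw [← hu_eq] at r1
        rw [← hu_eq'] at r2
        exact r1.symm.trans r2
      obtain ⟨p, hp⟩ := hreach_ab.exists_walk_length_eq_dist
      have hdistab : 2*(M+1)^j ≤ Gr.dist a b := by
        rw [← hp]
        have hlev : a.1.1 = b.1.1 := rfl
        exact walk_length_branch hlev hne hfar p
      -- arm estimates
      have harm_ua : ‖ψ u - ψ a‖ ≤ (rs:ℝ) * ((1-δ')^j * C₂ * (((M+1:ℕ)):ℝ)^j) := by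
        have hueq2 : u = vert Nk Vk σ ((M+1)^j * ((M+1)*q)) (by rw [← hulev]; exact hule) :=
          hu_eq.trans (vert_congr σ hulev _ _)
        have e1 := congrArg ψ hueq2
        have e2 := congrArg ψ hadef
        rw [e1, e2]
        exact chain σ ((M+1)*q) rs _ _
      have harm_av : ‖ψ a - ψ v‖ ≤ ((M+1-rs:ℕ):ℝ) * ((1-δ')^j * C₂ * (((M+1:ℕ)):ℝ)^j) := by
        have hveq2 : v = vert Nk Vk σ ((M+1)^j * (((M+1)*q+rs) + (M+1-rs)))
            (by rw [show (M+1)^j * (((M+1)*q+rs) + (M+1-rs)) = v.1.1 by rw [hvlev]; congr 1; omega]; exact hvle) := by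
          refine hv_eq.trans (vert_congr σ ?_ _ _)
          rw [hvlev]; congr 1; omega
        have e1 := congrArg ψ hveq2
        have e2 := congrArg ψ hadef
        rw [e1, e2]
        exact chain σ ((M+1)*q+rs) (M+1-rs) _ _
      have harm_ub : ‖ψ u - ψ b‖ ≤ (rs:ℝ) * ((1-δ')^j * C₂ * (((M+1:ℕ)):ℝ)^j) := by
        have hueq2 : u = vert Nk Vk σ' ((M+1)^j * ((M+1)*q)) (by rw [← hulev]; exact hule) :=
          hu_eq'.trans (vert_congr σ' hulev _ _)
        have e1 := congrArg ψ hueq2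
        have e2 := congrArg ψ hbdef
        rw [e1, e2]
        exact chain σ' ((M+1)*q) rs _ _
      have harm_bv : ‖ψ b - ψ v‖ ≤ ((M+1-rs:ℕ):ℝ) * ((1-δ')^j * C₂ * (((M+1:ℕ)):ℝ)^j) := by
        have hveq2 : v = vert Nk Vk σ' ((M+1)^j * (((M+1)*q+rs) + (M+1-rs)))
            (by rw [show (M+1)^j * (((M+1)*q+rs) + (M+1-rs)) = v.1.1 by rw [hvlev]; congr 1; omega]; exact hvle) := by
          refine hv_eq'.trans (vert_congr σ' ?_ _ _)
          rw [hvlev]; congr 1; omega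
        have e1 := congrArg ψ hveq2
        have e2 := congrArg ψ hbdef
        rw [e1, e2]
        exact chain σ' ((M+1)*q+rs) (M+1-rs) _ _
      -- the uniform convexity contradiction
      set D := (1-δ')^j * C₂ * (((M+1:ℕ)):ℝ)^j with hDdef
      have hPpos : (0:ℝ) < (((M+1:ℕ)):ℝ)^j := by positivity
      have hDpos : 0 < D := by
        rw [hDdef]
        have h1 : (0:ℝ) < (1-δ')^j := pow_pos (by linarith) j
        positivity
      set α := (rs:ℝ) * D with hαdef
      set β := ((M+1-rs:ℕ):ℝ) * D with hβdef
      have hrsR : (1:ℝ) ≤ (rs:ℝ) := by exact_mod_cast hrs1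
      have hMrsR : (1:ℝ) ≤ ((M+1-rs:ℕ):ℝ) := by
        have : 1 ≤ M+1-rs := by omega
        exact_mod_cast this
      have hα : 0 < α := by
        rw [hαdef]; exact mul_pos (by linarith) hDpos
      have hβ : 0 < β := by
        rw [hβdef]; exact mul_pos (by linarith) hDpos
      have hαβsum : α + β = ((M:ℝ)+1) * D := by
        rw [hαdef, hβdef]
        have hcast : ((M+1-rs:ℕ):ℝ) = ((M:ℝ)+1) - (rs:ℝ) := by
          rw [Nat.cast_sub (by omega)]; push_cast; ring
        rw [hcast]; ring
      by_contra hcon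
      push_neg at hcon
      have hRHSeq : (1-δ')^(j+1) * C₂ * (((M+1:ℕ)):ℝ)^(j+1) = (1-δ') * (((M:ℝ)+1) * D) := by
        rw [hDdef]
        have : (((M+1:ℕ)):ℝ) = (M:ℝ)+1 := by push_cast; ring
        rw [this]; ring
      rw [hRHSeq] at hcon
      -- hcon : (1-δ')*((M+1)*D) < ‖ψ u - ψ v‖
      have hx : ‖ψ a - ψ u‖ ≤ α := by rw [norm_sub_rev]; exact harm_ua
      have hy : ‖ψ v - ψ a‖ ≤ β := by rw [norm_sub_rev]; exact harm_av
      have hx' : ‖ψ b - ψ u‖ ≤ α := by rw [norm_sub_rev]; exact harm_ub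
      have hy' : ‖ψ v - ψ b‖ ≤ β := by rw [norm_sub_rev]; exact harm_bv
      have huc_gen : ∀ z : X, ‖z - ψ u‖ ≤ α → ‖ψ v - z‖ ≤ β →
          ¬ (ε₀ ≤ ‖α⁻¹ • (z - ψ u) - β⁻¹ • (ψ v - z)‖) := by
        intro z hz1 hz2 hge
        have hcomb2 := uc_comb hUC hα hβ hz1 hz2 hge
        have hsum : (z - ψ u) + (ψ v - z) = ψ v - ψ u := by abel
        rw [hsum] at hcomb2
        have hmin : D ≤ min α β := by
          apply le_min
          · rw [hαdef]
            calc D = 1*D := (one_mul D).symm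
            _ ≤ (rs:ℝ)*D := mul_le_mul_of_nonneg_right hrsR hDpos.le
          · rw [hβdef]
            calc D = 1*D := (one_mul D).symm
            _ ≤ ((M+1-rs:ℕ):ℝ)*D := mul_le_mul_of_nonneg_right hMrsR hDpos.le
        have hnv : ‖ψ v - ψ u‖ = ‖ψ u - ψ v‖ := norm_sub_rev _ _
        rw [hnv] at hcomb2
        have hfinal : α + β - min α β * δ₁ ≤ (1-δ') * (((M:ℝ)+1) * D) := by
          have hexp : (1-δ') * (((M:ℝ)+1) * D) = ((M:ℝ)+1)*D - (δ' * ((M:ℝ)+1)) * D := by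
            ring
          rw [hexp, hδ'M, hαβsum]
          have h5 := mul_le_mul_of_nonneg_right hmin hδ₁pos.le
          linarith
        linarith
      have hmain := huc_gen (ψ a) hx hy
      have hmain' := huc_gen (ψ b) hx' hy'
      push_neg at hmain hmain'
      have hdiff : (α⁻¹ • (ψ a - ψ u) - β⁻¹ • (ψ v - ψ a))
          - (α⁻¹ • (ψ b - ψ u) - β⁻¹ • (ψ v - ψ b)) = (α⁻¹ + β⁻¹) • (ψ a - ψ b) := by
        rw [add_smul, smul_sub, smul_sub, smul_sub, smul_sub, smul_sub, smul_sub]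
        abel
      have hcomb : (α⁻¹ + β⁻¹) * ‖ψ a - ψ b‖ < 2 * ε₀ := by
        have h1 : ‖(α⁻¹ + β⁻¹) • (ψ a - ψ b)‖ < 2 * ε₀ := by
          rw [← hdiff]
          calc ‖_ - _‖ ≤ ‖α⁻¹ • (ψ a - ψ u) - β⁻¹ • (ψ v - ψ a)‖
              + ‖α⁻¹ • (ψ b - ψ u) - β⁻¹ • (ψ v - ψ b)‖ := norm_sub_le _ _
          _ < ε₀ + ε₀ := add_lt_add hmain hmain'
          _ = 2 * ε₀ := by ring
        have h0 : (0:ℝ) ≤ α⁻¹ + β⁻¹ := by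
          have := inv_nonneg.mpr hα.le
          have := inv_nonneg.mpr hβ.le
          linarith
        rw [norm_smul, Real.norm_of_nonneg h0] at h1
        exact h1
      have hquarter : (4:ℝ) ≤ (α+β) * (α⁻¹+β⁻¹) := by
        have hne1 : α ≠ 0 := hα.ne'
        have hne2 : β ≠ 0 := hβ.ne'
        have hexp : (α+β) * (α⁻¹+β⁻¹) * (α*β) = (α+β)^2 := by
          field_simp
          ring
        nlinarith [sq_nonneg (α - β), mul_pos hα hβ]
      have hlowab : C₁ * (2*(((M+1:ℕ)):ℝ)^j) ≤ ‖ψ a - ψ b‖ := by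
        have h1 := (hψ a b).1
        calc C₁ * (2*(((M+1:ℕ)):ℝ)^j) ≤ C₁ * ((Gr.dist a b : ℕ):ℝ) := by
              apply mul_le_mul_of_nonneg_left _ hC₁.le
              have : ((2*(M+1)^j : ℕ):ℝ) ≤ ((Gr.dist a b : ℕ):ℝ) := by
                exact_mod_cast hdistab
              calc (2:ℝ)*(((M+1:ℕ)):ℝ)^j = ((2*(M+1)^j : ℕ):ℝ) := by push_cast; ring
              _ ≤ _ := this
        _ ≤ ‖ψ a - ψ b‖ := h1
      -- final arithmetic contradiction
      have hDle : D ≤ C₂ * (((M+1:ℕ)):ℝ)^j := by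
        rw [hDdef]
        have h1 : (1-δ')^j ≤ 1 := pow_le_one₀ h1δ'0 (by linarith)
        calc (1-δ')^j * C₂ * (((M+1:ℕ)):ℝ)^j = (1-δ')^j * (C₂ * (((M+1:ℕ)):ℝ)^j) := by ring
        _ ≤ 1 * (C₂ * (((M+1:ℕ)):ℝ)^j) :=
            mul_le_mul_of_nonneg_right h1 (by positivity)
        _ = C₂ * (((M+1:ℕ)):ℝ)^j := one_mul _
      have hε₀K : ε₀ * (((M:ℝ)+1) * K') = 1 := by
        rw [hε₀def]; field_simp
      have step1 : 4 * ‖ψ a - ψ b‖ ≤ ((α+β)*(α⁻¹+β⁻¹)) * ‖ψ a - ψ b‖ :=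
        mul_le_mul_of_nonneg_right hquarter (norm_nonneg _)
      have step2 : ((α+β)*(α⁻¹+β⁻¹)) * ‖ψ a - ψ b‖ < (α+β) * (2*ε₀) := by
        have := mul_lt_mul_of_pos_left hcomb (show (0:ℝ) < α+β by linarith)
        calc ((α+β)*(α⁻¹+β⁻¹)) * ‖ψ a - ψ b‖ = (α+β) * ((α⁻¹+β⁻¹) * ‖ψ a - ψ b‖) := by ring
        _ < (α+β) * (2*ε₀) := this
      have step3 : (α+β) * (2*ε₀) ≤ 2 * C₁ * (((M+1:ℕ)):ℝ)^j := by
        rw [hαβsum]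
        have hMC : ((M:ℝ)+1) * D ≤ ((M:ℝ)+1) * (C₂ * (((M+1:ℕ)):ℝ)^j) :=
          mul_le_mul_of_nonneg_left hDle (by linarith)
        have hC2K : ((M:ℝ)+1) * (C₂ * (((M+1:ℕ)):ℝ)^j) ≤ ((M:ℝ)+1) * (K' * C₁ * (((M+1:ℕ)):ℝ)^j) :=
          mul_le_mul_of_nonneg_left
            (mul_le_mul_of_nonneg_right hK'2 hPpos.le) (by linarith)
        calc ((M:ℝ)+1)*D * (2*ε₀) ≤ ((M:ℝ)+1) * (K' * C₁ * (((M+1:ℕ)):ℝ)^j) * (2*ε₀) := by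
              apply mul_le_mul_of_nonneg_right (le_trans hMC hC2K) (by positivity)
        _ = 2 * C₁ * (((M+1:ℕ)):ℝ)^j * (ε₀ * (((M:ℝ)+1) * K')) := by ring
        _ = 2 * C₁ * (((M+1:ℕ)):ℝ)^j := by rw [hε₀K]; ring
      have h9 : 4 * (C₁ * (2*(((M+1:ℕ)):ℝ)^j)) ≤ 4 * ‖ψ a - ψ b‖ := by linarith
      have h10 : 0 < C₁ * (((M+1:ℕ)):ℝ)^j := mul_pos hC₁ hPpos
      linarith
  -- final contradiction via the top pair
  have htopw : Vk ((M+1)^(n+1)) = 0 := by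
    have he : (M+1)^(n+1) = (M+1)^n * (M+1) := pow_succ _ _
    rw [hVkdef, he, wIter_pow_mul hw0 n n _ (le_refl n), Nat.sub_self]
    exact hwM
  have hzw : Vk 0 = 0 := by rw [hVkdef]; exact wIter_zero hw0 n
  have hu₀p : ((0:ℕ), ([]:List (Fin (κ''+2)))).1 ≤ Nk + 1 ∧
      ((0:ℕ), ([]:List (Fin (κ''+2)))).2.length = Vk ((0:ℕ), ([]:List (Fin (κ''+2)))).1 := by
    constructor
    · omega
    · simp [hzw]
  have hv₀p : (((M+1)^(n+1):ℕ), ([]:List (Fin (κ''+2)))).1 ≤ Nk + 1 ∧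
      (((M+1)^(n+1):ℕ), ([]:List (Fin (κ''+2)))).2.length
        = Vk (((M+1)^(n+1):ℕ), ([]:List (Fin (κ''+2)))).1 := by
    constructor
    · omega
    · simp [htopw]
  set u₀ : BundleVertex Nk Vk (Fin (κ''+2)) := ⟨(0, []), hu₀p⟩ with hu₀
  set v₀ : BundleVertex Nk Vk (Fin (κ''+2)) := ⟨((M+1)^(n+1), []), hv₀p⟩ with hv₀
  have hkey := key (n+1) (le_refl _) 0 u₀ v₀ (by simp; rfl)
    (by show (M+1)^(n+1) = (M+1)^(n+1)*(0+1); ring) (Or.inl (List.prefix_refl _))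
  have hreach : Gr.Reachable u₀ v₀ := by
    have h1 : u₀ = vert Nk Vk (fun _ => (0:Fin (κ''+2))) 0 (by omega) := by
      apply Subtype.ext
      show ((0:ℕ), ([]:List (Fin (κ''+2)))) = (0, listOf _ (Vk 0))
      rw [hzw]; rfl
    have h2 : v₀ = vert Nk Vk (fun _ => (0:Fin (κ''+2))) ((M+1)^(n+1)) (by omega) := by
      apply Subtype.ext
      show (((M+1)^(n+1):ℕ), ([]:List (Fin (κ''+2)))) = ((M+1)^(n+1), listOf _ (Vk ((M+1)^(n+1))))
      rw [htopw]; rfl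
    rw [h1, h2]
    exact vert_reachable _ (by omega) _ _
  obtain ⟨p, hp⟩ := hreach.exists_walk_length_eq_dist
  have hlen := (walk_level p).2
  have hdistlow : (M+1)^(n+1) ≤ Gr.dist u₀ v₀ := by
    rw [← hp]
    have e1 : u₀.1.1 = 0 := rfl
    have e2 : v₀.1.1 = (M+1)^(n+1) := rfl
    omega
  have hcast : (((M+1)^(n+1):ℕ):ℝ) = (((M+1:ℕ)):ℝ)^(n+1) := by push_cast; ring
  have hlow2 : C₁ * (((M+1:ℕ)):ℝ)^(n+1) ≤ ‖ψ u₀ - ψ v₀‖ := by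
    have h1 := (hψ u₀ v₀).1
    calc C₁ * (((M+1:ℕ)):ℝ)^(n+1) ≤ C₁ * ((Gr.dist u₀ v₀ : ℕ):ℝ) := by
          apply mul_le_mul_of_nonneg_left _ hC₁.le
          rw [← hcast]
          exact_mod_cast hdistlow
    _ ≤ _ := h1
  have hQpos : (0:ℝ) < (((M+1:ℕ)):ℝ)^(n+1) := by positivity
  have hC1le : C₁ * (((M+1:ℕ)):ℝ)^(n+1) ≤ (1-δ')^(n+1) * C₂ * (((M+1:ℕ)):ℝ)^(n+1) :=
    le_trans hlow2 hkey
  have hC1le2 : C₁ ≤ (1-δ')^(n+1) * C₂ := le_of_mul_le_mul_right hC1le hQpos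
  have hfin1 : (1-δ')^(n+1) * C₂ ≤ (1-δ')^n * C₂ := by
    apply mul_le_mul_of_nonneg_right _ hC₂.le
    calc (1-δ')^(n+1) = (1-δ')^n * (1-δ') := pow_succ _ _
    _ ≤ (1-δ')^n * 1 := mul_le_mul_of_nonneg_left (by linarith) (pow_nonneg h1δ'0 n)
    _ = (1-δ')^n := mul_one _
  have hfin2 : (1-δ')^n * C₂ ≤ (1-δ')^n * (K' * C₁) :=
    mul_le_mul_of_nonneg_left hK'2 (pow_nonneg h1δ'0 n)
  have hfin3 : (1-δ')^n * (K' * C₁) < (1/K') * (K' * C₁) :=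
    mul_lt_mul_of_pos_right hn (by positivity)
  have hfin4 : (1/K') * (K' * C₁) = C₁ := by field_simp
  linarith
end
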